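/- Let T > 0, C⋆ > 0, p > 0, s > p, 0 < q < s and ρ > 0; set γ := qs/(p(qs + 2(s−q)) + qρs) and δ := (1 − ργ)/2 (which is positive). Suppose that for every h ∈ (0,1] there are jointly measurable processes v₁ʰ, v₂ʰ on [0,T] with almost surely continuous paths, eʰ := v₁ʰ − v₂ʰ, and a random time τ_h : Ω → [0,T] such that {τ_h < T} ⊆ {sup_{t∈[0,T]}|v₁ʰ(t)| ≥ h^{−γ}} ∪ {sup_{t∈[0,T]}|v₂ʰ(t)| ≥ h^{−γ}}, E[sup_{t∈[0,T]}|vᵢʰ(t)|^p] ≤ C⋆ and sup_{t∈[0,T]} E[|vᵢʰ(t)|^s] ≤ C⋆ for i = 1,2, and E[sup_{t∈[0,τ_h]}|eʰ(t)|²] ≤ h^{2δ}. Then there is a constant C, depending only on p, q, s, ρ and C⋆, such that (sup_{t∈[0,T]} E[|eʰ(t)|^q])^{1/q} ≤ C·h^{p(s−q)/(2p(s−q) + (p+ρ)qs)} for all h ∈ (0,1]. -/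

import Mathlib

open MeasureTheory Set

/-- splitting: `x^a ≤ m^(a-r) x^r + m^a`. -/
lemma my_rpow_split {x m a r : ℝ} (hx : 0 ≤ x) (hm : 0 < m) (ha : 0 ≤ a) (har : a ≤ r) :
    x ^ a ≤ m ^ (a - r) * x ^ r + m ^ a := by
  rcases le_or_gt x m with hxm | hxm
  · have h1 : x ^ a ≤ m ^ a := Real.rpow_le_rpow hx hxm ha
    have h2 : 0 ≤ m ^ (a - r) * x ^ r :=
      mul_nonneg (Real.rpow_nonneg hm.le _) (Real.rpow_nonneg hx _)
    linarith
  · have hx0 : 0 < x := hm.trans hxm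
    have h1 : x ^ a = x ^ (a - r) * x ^ r := by
      rw [← Real.rpow_add hx0]; ring_nf
    have h2 : x ^ (a - r) ≤ m ^ (a - r) :=
      Real.rpow_le_rpow_of_nonpos hm hxm.le (by linarith)
    have h3 : 0 ≤ m ^ a := Real.rpow_nonneg hm.le _
    have h4 : 0 ≤ x ^ r := Real.rpow_nonneg hx _
    nlinarith

/-- splitting for the middle regime: `x^a ≤ m^(a-2) x^2 + m^(a-r) x^r` when `2 ≤ a ≤ r`. -/
lemma my_rpow_split' {x m a r : ℝ} (hx : 0 ≤ x) (hm : 0 < m) (h2a : 2 ≤ a) (har : a ≤ r) :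
    x ^ a ≤ m ^ (a - 2) * x ^ (2 : ℝ) + m ^ (a - r) * x ^ r := by
  have hnn1 : 0 ≤ m ^ (a - 2) * x ^ (2 : ℝ) :=
    mul_nonneg (Real.rpow_nonneg hm.le _) (Real.rpow_nonneg hx _)
  have hnn2 : 0 ≤ m ^ (a - r) * x ^ r :=
    mul_nonneg (Real.rpow_nonneg hm.le _) (Real.rpow_nonneg hx _)
  rcases eq_or_lt_of_le hx with h0 | hx0
  · rw [← h0, Real.zero_rpow (by linarith : a ≠ 0)]
    positivity
  rcases le_or_gt x m with hxm | hxm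
  · have h1 : x ^ a = x ^ (a - 2) * x ^ (2 : ℝ) := by
      rw [← Real.rpow_add hx0]; ring_nf
    have h2 : x ^ (a - 2) ≤ m ^ (a - 2) := Real.rpow_le_rpow hx hxm (by linarith)
    have h4 : 0 ≤ x ^ (2 : ℝ) := Real.rpow_nonneg hx _
    nlinarith [mul_le_mul_of_nonneg_right h2 h4]
  · have h1 : x ^ a = x ^ (a - r) * x ^ r := by
      rw [← Real.rpow_add hx0]; ring_nf
    have h2 : x ^ (a - r) ≤ m ^ (a - r) :=
      Real.rpow_le_rpow_of_nonpos hm hxm.le (by linarith)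
    have h4 : 0 ≤ x ^ r := Real.rpow_nonneg hx _
    nlinarith [mul_le_mul_of_nonneg_right h2 h4]

/-- elementary: `|a-b|^r ≤ 2^r (|a|^r + |b|^r)` for `r ≥ 0`. -/
lemma my_abs_sub_rpow {a b r : ℝ} (hr : 0 ≤ r) :
    |a - b| ^ r ≤ (2 : ℝ) ^ r * (|a| ^ r + |b| ^ r) := by
  have h1 : |a - b| ≤ 2 * max |a| |b| := by
    have := abs_sub a b
    have h2 : |a| ≤ max |a| |b| := le_max_left _ _
    have h3 : |b| ≤ max |a| |b| := le_max_right _ _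
    linarith
  have h2 : |a - b| ^ r ≤ (2 * max |a| |b|) ^ r :=
    Real.rpow_le_rpow (abs_nonneg _) h1 hr
  have hmx : (0:ℝ) ≤ max |a| |b| := le_max_of_le_left (abs_nonneg _)
  have h3 : (2 * max |a| |b|) ^ r = (2:ℝ) ^ r * (max |a| |b|) ^ r :=
    Real.mul_rpow (by norm_num) hmx
  have h4 : (max |a| |b|) ^ r ≤ |a| ^ r + |b| ^ r := by
    rcases max_cases |a| |b| with ⟨hm, _⟩ | ⟨hm, _⟩ <;> rw [hm]
    · nlinarith [Real.rpow_nonneg (abs_nonneg b) r]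
    · nlinarith [Real.rpow_nonneg (abs_nonneg a) r]
  have h5 : (0:ℝ) ≤ (2:ℝ) ^ r := Real.rpow_nonneg (by norm_num) r
  nlinarith

/-- The pathwise supremum of `|v|` over `[0,T]` is a.e.-measurable when paths are
a.s. continuous. -/
lemma my_aemeas_sup {Ω : Type*} [MeasurableSpace Ω] (μ : Measure Ω) {T : ℝ} (hT : 0 ≤ T)
    (v : ℝ → Ω → ℝ) (hm : Measurable (Function.uncurry v))
    (hc : ∀ᵐ ω ∂μ, ContinuousOn (fun t => v t ω) (Icc 0 T)) :
    AEMeasurable (fun ω => ⨆ t : Icc (0:ℝ) T, |v t.1 ω|) μ := by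
  have hne : (Icc (0:ℝ) T).Nonempty := nonempty_Icc.2 hT
  haveI : Nonempty (Icc (0:ℝ) T) := hne.to_subtype
  haveI : CompactSpace (Icc (0:ℝ) T) := isCompact_iff_compactSpace.mp isCompact_Icc
  obtain ⟨u, hu⟩ := TopologicalSpace.exists_dense_seq ℝ
  set w : ℕ → Icc (0:ℝ) T := fun k => projIcc 0 T hT (u k) with hw
  have hwd : DenseRange w :=
    DenseRange.comp (projIcc_surjective hT).denseRange hu (continuous_projIcc)
  have hmeas_vt : ∀ t : ℝ, Measurable fun ω => |v t ω| := fun t =>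
    (hm.comp measurable_prodMk_left).abs
  let g : ℕ → Ω → ℝ := fun n => Nat.rec (fun ω => |v (w 0).1 ω|)
    (fun k gk ω => max (gk ω) |v (w (k + 1)).1 ω|) n
  have hg_succ : ∀ k ω, g (k + 1) ω = max (g k ω) |v (w (k + 1)).1 ω| := fun _ _ => rfl
  have hgm : ∀ n, Measurable (g n) := by
    intro n
    induction n with
    | zero => exact hmeas_vt _
    | succ k ih => exact ih.max (hmeas_vt _)
  have hgmono : ∀ ω, Monotone fun n => g n ω := fun ω =>
    monotone_nat_of_le_succ fun k => by rw [hg_succ]; exact le_max_left _ _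
  have hgle : ∀ k ω, |v (w k).1 ω| ≤ g k ω := by
    intro k ω
    cases k with
    | zero => exact le_refl _
    | succ k => rw [hg_succ]; exact le_max_right _ _
  refine aemeasurable_of_tendsto_metrizable_ae' (fun n => (hgm n).aemeasurable) ?_
  filter_upwards [hc] with ω hω
  have hrc : Continuous fun t : Icc (0:ℝ) T => |v t.1 ω| := by
    have := hω.restrict
    exact this.abs
  obtain ⟨t0, -, ht0⟩ := isCompact_univ.exists_isMaxOn univ_nonempty hrc.continuousOn
  have ht0' : ∀ t : Icc (0:ℝ) T, |v t.1 ω| ≤ |v t0.1 ω| := fun t => ht0 (mem_univ t)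
  have hbdd : BddAbove (range fun t : Icc (0:ℝ) T => |v t.1 ω|) := by
    refine ⟨|v t0.1 ω|, ?_⟩
    rintro x ⟨t, rfl⟩
    exact ht0' t
  have hSM : (⨆ t : Icc (0:ℝ) T, |v t.1 ω|) = |v t0.1 ω| :=
    le_antisymm (ciSup_le ht0') (le_ciSup hbdd t0)
  have hgbdd : ∀ n, g n ω ≤ |v t0.1 ω| := by
    intro n
    induction n with
    | zero => exact ht0' _
    | succ k ih => rw [hg_succ]; exact max_le ih (ht0' _)
  have hbdd2 : BddAbove (range fun n => g n ω) := by
    refine ⟨|v t0.1 ω|, ?_⟩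
    rintro x ⟨n, rfl⟩
    exact hgbdd n
  have hten : Filter.Tendsto (fun n => g n ω) Filter.atTop (nhds (⨆ n, g n ω)) :=
    tendsto_atTop_ciSup (hgmono ω) hbdd2
  have hLM : (⨆ n, g n ω) = |v t0.1 ω| := by
    refine le_antisymm (ciSup_le hgbdd) ?_
    obtain ⟨x, hxmem, hxt⟩ := mem_closure_iff_seq_limit.1 (hwd t0)
    have hcont : Filter.Tendsto (fun j => |v (x j).1 ω|) Filter.atTop (nhds (|v t0.1 ω|)) :=
      (hrc.tendsto t0).comp hxt
    refine le_of_tendsto hcont (Filter.Eventually.of_forall fun j => ?_)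
    obtain ⟨k, hk⟩ := hxmem j
    rw [← hk]
    exact (hgle k ω).trans (le_ciSup hbdd2 k)
  simpa [hSM, ← hLM] using hten

/-- Markov/Chebyshev for a real random variable via `p`-th moments. -/
lemma my_markov {Ω : Type*} [MeasurableSpace Ω] {μ : Measure Ω} {S : Ω → ℝ}
    (hS : AEMeasurable S μ) {pp c Cs : ℝ} (hpp : 0 ≤ pp) (hc : 0 < c)
    (hb : ∫⁻ ω, ENNReal.ofReal (S ω ^ pp) ∂μ ≤ ENNReal.ofReal Cs) :
    μ {ω | c ≤ S ω} ≤ ENNReal.ofReal Cs / ENNReal.ofReal (c ^ pp) := by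
  have hf : AEMeasurable (fun ω => ENNReal.ofReal (S ω ^ pp)) μ :=
    ENNReal.measurable_ofReal.comp_aemeasurable
      ((Real.continuous_rpow_const hpp).measurable.comp_aemeasurable hS)
  have hsub : {ω | c ≤ S ω} ⊆
      {ω | ENNReal.ofReal (c ^ pp) ≤ ENNReal.ofReal (S ω ^ pp)} := fun ω hω =>
    ENNReal.ofReal_le_ofReal (Real.rpow_le_rpow hc.le hω hpp)
  have hcp : (0:ℝ) < c ^ pp := Real.rpow_pos_of_pos hc pp
  calc μ {ω | c ≤ S ω} ≤ μ {ω | ENNReal.ofReal (c ^ pp) ≤ ENNReal.ofReal (S ω ^ pp)} :=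
        measure_mono hsub
    _ ≤ (∫⁻ ω, ENNReal.ofReal (S ω ^ pp) ∂μ) / ENNReal.ofReal (c ^ pp) := by
        rw [ENNReal.le_div_iff_mul_le (Or.inl (ENNReal.ofReal_pos.2 hcp).ne')
          (Or.inl ENNReal.ofReal_ne_top), mul_comm]
        exact mul_meas_ge_le_lintegral₀ hf _
    _ ≤ ENNReal.ofReal Cs / ENNReal.ofReal (c ^ pp) := ENNReal.div_le_div_right hb _

set_option maxHeartbeats 2000000 in
/-- Optimal-rate version of lemma `lem:rate_weak`: with `γ = qs/(p(qs+2(s-q))+qρs)` and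
`δ = (1-ργ)/2`, the pointwise strong error in `L^q` is of order
`h^(p(s-q)/(2p(s-q)+(p+ρ)qs))`, with a constant depending only on `p`, `q`, `s`, `ρ`, `C⋆`. -/
theorem enkf_rate_weak_optimal
    {Ω : Type*} [MeasurableSpace Ω] (μ : Measure Ω) [IsProbabilityMeasure μ]
    (p q s ρ Cs : ℝ) (hp : 0 < p) (hps : p < s) (hq0 : 0 < q) (hqs : q < s)
    (hρ : 0 < ρ) (hCs : 0 < Cs) :
    ∃ C > 0, ∀ T : ℝ, 0 < T →
      ∀ h ∈ Ioc (0:ℝ) 1, ∀ (v₁ v₂ : ℝ → Ω → ℝ) (τ : Ω → ℝ),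
      Measurable (Function.uncurry v₁) → Measurable (Function.uncurry v₂) →
      (∀ᵐ ω ∂μ, ContinuousOn (fun t => v₁ t ω) (Icc 0 T)) →
      (∀ᵐ ω ∂μ, ContinuousOn (fun t => v₂ t ω) (Icc 0 T)) →
      Measurable τ → (∀ ω, τ ω ∈ Icc (0:ℝ) T) →
      ({ω | τ ω < T} ⊆
        {ω | h ^ (-(q * s / (p * (q * s + 2 * (s - q)) + q * ρ * s)))
              ≤ ⨆ t : Icc (0:ℝ) T, |v₁ t.1 ω|}
          ∪ {ω | h ^ (-(q * s / (p * (q * s + 2 * (s - q)) + q * ρ * s)))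
              ≤ ⨆ t : Icc (0:ℝ) T, |v₂ t.1 ω|}) →
      (∫⁻ ω, ENNReal.ofReal ((⨆ t : Icc (0:ℝ) T, |v₁ t.1 ω|) ^ p) ∂μ ≤ ENNReal.ofReal Cs) →
      (∫⁻ ω, ENNReal.ofReal ((⨆ t : Icc (0:ℝ) T, |v₂ t.1 ω|) ^ p) ∂μ ≤ ENNReal.ofReal Cs) →
      ((⨆ t : Icc (0:ℝ) T, ∫⁻ ω, ENNReal.ofReal (|v₁ t.1 ω| ^ s) ∂μ) ≤ ENNReal.ofReal Cs) →
      ((⨆ t : Icc (0:ℝ) T, ∫⁻ ω, ENNReal.ofReal (|v₂ t.1 ω| ^ s) ∂μ) ≤ ENNReal.ofReal Cs) →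
      (∫⁻ ω, ENNReal.ofReal ((⨆ t : Icc (0:ℝ) (τ ω), |v₁ t.1 ω - v₂ t.1 ω|) ^ 2) ∂μ
          ≤ ENNReal.ofReal
              (h ^ (2 * ((1 - ρ * (q * s / (p * (q * s + 2 * (s - q)) + q * ρ * s))) / 2)))) →
      (⨆ t : Icc (0:ℝ) T, ∫⁻ ω, ENNReal.ofReal (|v₁ t.1 ω - v₂ t.1 ω| ^ q) ∂μ) ^ (1/q)
        ≤ ENNReal.ofReal (C * h ^ (p * (s - q) / (2 * p * (s - q) + (p + ρ) * q * s))) := by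
  have hs0 : (0:ℝ) < s := hp.trans hps
  set D := p * (q * s + 2 * (s - q)) + q * ρ * s with hD
  have hD0 : 0 < D := by
    rw [hD]
    nlinarith [mul_pos hp (mul_pos hq0 hs0), mul_pos hp (sub_pos.2 hqs),
      mul_pos hq0 (mul_pos hρ hs0)]
  set γ := q * s / D with hγ
  have hγ0 : 0 < γ := div_pos (mul_pos hq0 hs0) hD0
  set α := p * (s - q) / (2 * p * (s - q) + (p + ρ) * q * s) with hα
  have hden : 2 * p * (s - q) + (p + ρ) * q * s = D := by rw [hD]; ring
  have hαval : α = p * (s - q) / D := by rw [hα, hden]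
  have hα0 : 0 < α := by rw [hαval]; exact div_pos (mul_pos hp (sub_pos.2 hqs)) hD0
  have hW : 1 - ρ * γ = (p * (q * s) + 2 * p * (s - q)) / D := by
    rw [hγ, mul_div_assoc', one_sub_div hD0.ne', hD]; ring
  have hW0 : 0 < 1 - ρ * γ := by
    rw [hW]
    exact div_pos (by nlinarith [mul_pos hp (mul_pos hq0 hs0), mul_pos hp (sub_pos.2 hqs)]) hD0
  have e1 : (-(γ * p / s)) * (q - s) = q * α := by
    rw [hαval, hγ]; field_simp; ring
  have e2 : (-(γ * p / s)) * q + γ * p = q * α := by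
    rw [hαval, hγ]; field_simp; ring
  have eδ : q * α ≤ ((1 - ρ * γ) / 2) * q := by
    have h1 : α ≤ (1 - ρ * γ) / 2 := by
      rw [hαval, hW, div_div, div_le_div_iff₀ hD0 (by positivity)]
      nlinarith [mul_pos (mul_pos (mul_pos hp hq0) hs0) hD0]
    nlinarith
  set K := 4 * (2:ℝ) ^ s * Cs + 2 * Cs + 2 with hK
  have h2s : (0:ℝ) < (2:ℝ) ^ s := Real.rpow_pos_of_pos (by norm_num) s
  have hK0 : 0 < K := by rw [hK]; positivity
  clear_value D γ α K
  refine ⟨K ^ (1/q), Real.rpow_pos_of_pos hK0 _, ?_⟩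
  intro T hT h hmem v₁ v₂ τ hm1 hm2 hc1 hc2 hmτ hτmem hsubset hv1p hv2p hv1s hv2s he2
  obtain ⟨hh0, hh1⟩ := hmem
  rw [show (2:ℝ) * ((1 - ρ * γ) / 2) = 1 - ρ * γ from by ring] at he2
  set A := {ω | τ ω < T} with hAdef
  have hA : MeasurableSet A := measurableSet_lt hmτ measurable_const
  clear_value A
  -- Markov bound on μ A
  have hS1 := my_aemeas_sup μ hT.le v₁ hm1 hc1
  have hS2 := my_aemeas_sup μ hT.le v₂ hm2 hc2
  have hγp : (0:ℝ) < h ^ (-γ) := Real.rpow_pos_of_pos hh0 _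
  have hdivid : ENNReal.ofReal Cs / ENNReal.ofReal ((h ^ (-γ)) ^ p)
      = ENNReal.ofReal (Cs * h ^ (γ * p)) := by
    rw [← Real.rpow_mul hh0.le, ← ENNReal.ofReal_div_of_pos (Real.rpow_pos_of_pos hh0 _)]
    congr 1
    rw [show -γ * p = -(γ * p) from by ring, Real.rpow_neg hh0.le, div_eq_mul_inv, inv_inv]
  have hμA : μ A ≤ ENNReal.ofReal (2 * (Cs * h ^ (γ * p))) := by
    calc μ A ≤ μ ({ω | h ^ (-γ) ≤ ⨆ t : Icc (0:ℝ) T, |v₁ t.1 ω|}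
          ∪ {ω | h ^ (-γ) ≤ ⨆ t : Icc (0:ℝ) T, |v₂ t.1 ω|}) := measure_mono hsubset
      _ ≤ μ {ω | h ^ (-γ) ≤ ⨆ t : Icc (0:ℝ) T, |v₁ t.1 ω|}
          + μ {ω | h ^ (-γ) ≤ ⨆ t : Icc (0:ℝ) T, |v₂ t.1 ω|} := measure_union_le _ _
      _ ≤ ENNReal.ofReal (Cs * h ^ (γ * p)) + ENNReal.ofReal (Cs * h ^ (γ * p)) := by
          exact add_le_add ((my_markov hS1 hp.le hγp hv1p).trans_eq hdivid)
            ((my_markov hS2 hp.le hγp hv2p).trans_eq hdivid)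
      _ = ENNReal.ofReal (2 * (Cs * h ^ (γ * p))) := by
          rw [← ENNReal.ofReal_add (by positivity) (by positivity)]; congr 1; ring
  have hmeas_e : ∀ t : ℝ, Measurable fun ω => v₁ t ω - v₂ t ω := fun t =>
    (hm1.comp measurable_prodMk_left).sub (hm2.comp measurable_prodMk_left)
  -- s-th moment of the difference
  have hEs : ∀ t : Icc (0:ℝ) T, ∫⁻ ω, ENNReal.ofReal (|v₁ t.1 ω - v₂ t.1 ω| ^ s) ∂μ
      ≤ ENNReal.ofReal ((2:ℝ) ^ s * (2 * Cs)) := by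
    intro t
    have hpt : ∀ ω, ENNReal.ofReal (|v₁ t.1 ω - v₂ t.1 ω| ^ s) ≤
        ENNReal.ofReal ((2:ℝ) ^ s)
          * (ENNReal.ofReal (|v₁ t.1 ω| ^ s) + ENNReal.ofReal (|v₂ t.1 ω| ^ s)) := by
      intro ω
      rw [← ENNReal.ofReal_add (Real.rpow_nonneg (abs_nonneg _) _)
        (Real.rpow_nonneg (abs_nonneg _) _),
        ← ENNReal.ofReal_mul (Real.rpow_nonneg (by norm_num) _)]
      exact ENNReal.ofReal_le_ofReal (my_abs_sub_rpow hs0.le)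
    have m1 : Measurable fun ω => ENNReal.ofReal (|v₁ t.1 ω| ^ s) :=
      ENNReal.measurable_ofReal.comp
        ((Real.continuous_rpow_const hs0.le).measurable.comp
          (hm1.comp measurable_prodMk_left).abs)
    calc ∫⁻ ω, ENNReal.ofReal (|v₁ t.1 ω - v₂ t.1 ω| ^ s) ∂μ
        ≤ ∫⁻ ω, ENNReal.ofReal ((2:ℝ) ^ s)
            * (ENNReal.ofReal (|v₁ t.1 ω| ^ s) + ENNReal.ofReal (|v₂ t.1 ω| ^ s)) ∂μ :=
          lintegral_mono hpt
      _ = ENNReal.ofReal ((2:ℝ) ^ s)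
            * ((∫⁻ ω, ENNReal.ofReal (|v₁ t.1 ω| ^ s) ∂μ)
              + ∫⁻ ω, ENNReal.ofReal (|v₂ t.1 ω| ^ s) ∂μ) := by
          rw [lintegral_const_mul' _ _ ENNReal.ofReal_ne_top, lintegral_add_left m1]
      _ ≤ ENNReal.ofReal ((2:ℝ) ^ s) * (ENNReal.ofReal Cs + ENNReal.ofReal Cs) := by
          gcongr
          · exact le_trans
              (le_iSup (fun t' : Icc (0:ℝ) T => ∫⁻ ω, ENNReal.ofReal (|v₁ t'.1 ω| ^ s) ∂μ) t) hv1s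
          · exact le_trans
              (le_iSup (fun t' : Icc (0:ℝ) T => ∫⁻ ω, ENNReal.ofReal (|v₂ t'.1 ω| ^ s) ∂μ) t) hv2s
      _ = ENNReal.ofReal ((2:ℝ) ^ s * (2 * Cs)) := by
          rw [← ENNReal.ofReal_add hCs.le hCs.le,
            ← ENNReal.ofReal_mul (Real.rpow_nonneg (by norm_num) _)]
          congr 1; ring
  -- generic integration step
  have main : ∀ (t : Icc (0:ℝ) T) (b₁ b₂ b₃ b₄ : ℝ), 0 ≤ b₁ → 0 ≤ b₂ → 0 ≤ b₃ → 0 ≤ b₄ →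
      (∀ᵐ ω ∂μ, ENNReal.ofReal (|v₁ t.1 ω - v₂ t.1 ω| ^ q) ≤
          ENNReal.ofReal (b₁ * |v₁ t.1 ω - v₂ t.1 ω| ^ s)
          + (A.indicator (fun _ => ENNReal.ofReal b₂) ω
          + (ENNReal.ofReal b₃
          + ENNReal.ofReal b₄
            * ENNReal.ofReal ((⨆ t' : Icc (0:ℝ) (τ ω), |v₁ t'.1 ω - v₂ t'.1 ω|) ^ 2)))) →
      ∫⁻ ω, ENNReal.ofReal (|v₁ t.1 ω - v₂ t.1 ω| ^ q) ∂μ ≤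
        ENNReal.ofReal (b₁ * ((2:ℝ) ^ s * (2 * Cs)) + b₂ * (2 * (Cs * h ^ (γ * p))) + b₃
          + b₄ * h ^ (1 - ρ * γ)) := by
    intro t b₁ b₂ b₃ b₄ hb₁ hb₂ hb₃ hb₄ hptw
    have m1 : Measurable fun ω => ENNReal.ofReal (b₁ * |v₁ t.1 ω - v₂ t.1 ω| ^ s) :=
      ENNReal.measurable_ofReal.comp
        (measurable_const.mul ((Real.continuous_rpow_const hs0.le).measurable.comp
          (hmeas_e t.1).abs))
    have m2 : Measurable fun ω => A.indicator (fun _ => ENNReal.ofReal b₂) ω :=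
      measurable_const.indicator hA
    calc ∫⁻ ω, ENNReal.ofReal (|v₁ t.1 ω - v₂ t.1 ω| ^ q) ∂μ
        ≤ ∫⁻ ω, (ENNReal.ofReal (b₁ * |v₁ t.1 ω - v₂ t.1 ω| ^ s)
            + (A.indicator (fun _ => ENNReal.ofReal b₂) ω
            + (ENNReal.ofReal b₃
            + ENNReal.ofReal b₄
              * ENNReal.ofReal ((⨆ t' : Icc (0:ℝ) (τ ω), |v₁ t'.1 ω - v₂ t'.1 ω|) ^ 2)))) ∂μ :=
          lintegral_mono_ae hptw
      _ = (∫⁻ ω, ENNReal.ofReal (b₁ * |v₁ t.1 ω - v₂ t.1 ω| ^ s) ∂μ)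
          + ((∫⁻ ω, A.indicator (fun _ => ENNReal.ofReal b₂) ω ∂μ)
          + ((∫⁻ _, ENNReal.ofReal b₃ ∂μ)
          + ∫⁻ ω, ENNReal.ofReal b₄
              * ENNReal.ofReal ((⨆ t' : Icc (0:ℝ) (τ ω), |v₁ t'.1 ω - v₂ t'.1 ω|) ^ 2) ∂μ)) := by
          rw [lintegral_add_left m1, lintegral_add_left m2, lintegral_add_left measurable_const]
      _ ≤ ENNReal.ofReal b₁ * ENNReal.ofReal ((2:ℝ) ^ s * (2 * Cs))
          + (ENNReal.ofReal b₂ * ENNReal.ofReal (2 * (Cs * h ^ (γ * p)))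
          + (ENNReal.ofReal b₃
          + ENNReal.ofReal b₄ * ENNReal.ofReal (h ^ (1 - ρ * γ)))) := by
          refine add_le_add ?_ (add_le_add ?_ (add_le_add ?_ ?_))
          · simp_rw [ENNReal.ofReal_mul hb₁]
            rw [lintegral_const_mul' _ _ ENNReal.ofReal_ne_top]
            exact mul_le_mul_right (hEs t) _
          · rw [lintegral_indicator_const hA]
            exact mul_le_mul_right hμA _
          · rw [lintegral_const, measure_univ, mul_one]
          · rw [lintegral_const_mul' _ _ ENNReal.ofReal_ne_top]
            exact mul_le_mul_right he2 _
      _ = ENNReal.ofReal (b₁ * ((2:ℝ) ^ s * (2 * Cs)) + b₂ * (2 * (Cs * h ^ (γ * p))) + b₃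
          + b₄ * h ^ (1 - ρ * γ)) := by
          rw [← ENNReal.ofReal_mul hb₁, ← ENNReal.ofReal_mul hb₂, ← ENNReal.ofReal_mul hb₄,
            ← ENNReal.ofReal_add (by positivity) (by positivity),
            ← ENNReal.ofReal_add (by positivity) (by positivity),
            ← ENNReal.ofReal_add (by positivity) (by positivity)]
          congr 1; ring
  -- pointwise key bound for each fixed time
  have key : ∀ t : Icc (0:ℝ) T, ∫⁻ ω, ENNReal.ofReal (|v₁ t.1 ω - v₂ t.1 ω| ^ q) ∂μ
      ≤ ENNReal.ofReal (K * h ^ (q * α)) := by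
    intro t
    have hqα0 : (0:ℝ) ≤ h ^ (q * α) := Real.rpow_nonneg hh0.le _
    have hb2e : h ^ (-(γ * p / s) * q) * (2 * (Cs * h ^ (γ * p))) = 2 * Cs * h ^ (q * α) := by
      rw [show h ^ (-(γ * p / s) * q) * (2 * (Cs * h ^ (γ * p)))
          = 2 * Cs * (h ^ (-(γ * p / s) * q) * h ^ (γ * p)) from by ring,
        ← Real.rpow_add hh0, e2]
    rcases le_or_gt q 2 with hq2 | hq2
    · -- case q ≤ 2
      refine (main t (h ^ (-(γ * p / s) * (q - s))) (h ^ (-(γ * p / s) * q))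
        (h ^ ((1 - ρ * γ) / 2 * q)) (h ^ ((1 - ρ * γ) / 2 * (q - 2)))
        (Real.rpow_nonneg hh0.le _) (Real.rpow_nonneg hh0.le _)
        (Real.rpow_nonneg hh0.le _) (Real.rpow_nonneg hh0.le _) ?_).trans ?_
      · -- pointwise bound
        filter_upwards [hc1, hc2] with ω h1 h2
        have hx0 : (0:ℝ) ≤ |v₁ t.1 ω - v₂ t.1 ω| := abs_nonneg _
        by_cases hωA : ω ∈ A
        · have hb : |v₁ t.1 ω - v₂ t.1 ω| ^ q
              ≤ h ^ (-(γ * p / s) * (q - s)) * |v₁ t.1 ω - v₂ t.1 ω| ^ s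
                + h ^ (-(γ * p / s) * q) := by
            have hsplit := my_rpow_split (m := h ^ (-(γ * p / s))) hx0
              (Real.rpow_pos_of_pos hh0 _) hq0.le hqs.le
            rw [Real.rpow_mul hh0.le, Real.rpow_mul hh0.le]
            exact hsplit
          have h3 : ENNReal.ofReal (|v₁ t.1 ω - v₂ t.1 ω| ^ q)
              ≤ ENNReal.ofReal (h ^ (-(γ * p / s) * (q - s)) * |v₁ t.1 ω - v₂ t.1 ω| ^ s)
                + ENNReal.ofReal (h ^ (-(γ * p / s) * q)) := by
            rw [← ENNReal.ofReal_add (by positivity) (by positivity)]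
            exact ENNReal.ofReal_le_ofReal hb
          refine h3.trans (add_le_add le_rfl ?_)
          rw [indicator_of_mem hωA]
          exact self_le_add_right _ _
        · have hωA' : ¬ τ ω < T := by simpa [hAdef] using hωA
          have hτT : τ ω = T := le_antisymm (hτmem ω).2 (not_lt.1 hωA')
          have hbddy : BddAbove
              (range fun t' : Icc (0:ℝ) (τ ω) => |v₁ t'.1 ω - v₂ t'.1 ω|) := by
            have hcon : ContinuousOn (fun t' => |v₁ t' ω - v₂ t' ω|) (Icc 0 T) :=
              (h1.sub h2).abs
            have hb := isCompact_Icc.bddAbove_image hcon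
            rw [image_eq_range] at hb
            rw [hτT]
            exact hb
          have hxy : |v₁ t.1 ω - v₂ t.1 ω|
              ≤ ⨆ t' : Icc (0:ℝ) (τ ω), |v₁ t'.1 ω - v₂ t'.1 ω| := by
            have ht' : (t.1 : ℝ) ∈ Icc 0 (τ ω) := by rw [hτT]; exact t.2
            exact le_ciSup hbddy ⟨t.1, ht'⟩
          have hb : |v₁ t.1 ω - v₂ t.1 ω| ^ q
              ≤ h ^ ((1 - ρ * γ) / 2 * q)
                + h ^ ((1 - ρ * γ) / 2 * (q - 2))
                  * (⨆ t' : Icc (0:ℝ) (τ ω), |v₁ t'.1 ω - v₂ t'.1 ω|) ^ 2 := by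
            have hsplit := my_rpow_split (r := 2) (m := h ^ ((1 - ρ * γ) / 2)) hx0
              (Real.rpow_pos_of_pos hh0 _) hq0.le hq2
            rw [Real.rpow_two] at hsplit
            have h7 : |v₁ t.1 ω - v₂ t.1 ω| ^ 2
                ≤ (⨆ t' : Icc (0:ℝ) (τ ω), |v₁ t'.1 ω - v₂ t'.1 ω|) ^ 2 :=
              pow_le_pow_left₀ hx0 hxy 2
            have h8 : (0:ℝ) ≤ (h ^ ((1 - ρ * γ) / 2)) ^ (q - 2) :=
              Real.rpow_nonneg (Real.rpow_nonneg hh0.le _) _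
            rw [Real.rpow_mul hh0.le, Real.rpow_mul hh0.le]
            nlinarith [mul_le_mul_of_nonneg_left h7 h8]
          have h3 : ENNReal.ofReal (|v₁ t.1 ω - v₂ t.1 ω| ^ q)
              ≤ ENNReal.ofReal (h ^ ((1 - ρ * γ) / 2 * q))
                + ENNReal.ofReal (h ^ ((1 - ρ * γ) / 2 * (q - 2)))
                  * ENNReal.ofReal
                    ((⨆ t' : Icc (0:ℝ) (τ ω), |v₁ t'.1 ω - v₂ t'.1 ω|) ^ 2) := by
            rw [← ENNReal.ofReal_mul (by positivity),
              ← ENNReal.ofReal_add (by positivity) (by positivity)]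
            exact ENNReal.ofReal_le_ofReal hb
          exact h3.trans (le_add_self.trans le_add_self)
      · -- numeric bound
        refine ENNReal.ofReal_le_ofReal ?_
        have t1 : h ^ (-(γ * p / s) * (q - s)) = h ^ (q * α) := by rw [e1]
        have t3 : h ^ ((1 - ρ * γ) / 2 * q) ≤ h ^ (q * α) :=
          Real.rpow_le_rpow_of_exponent_ge hh0 hh1 eδ
        have t4 : h ^ ((1 - ρ * γ) / 2 * (q - 2)) * h ^ (1 - ρ * γ) ≤ h ^ (q * α) := by
          rw [← Real.rpow_add hh0,
            show (1 - ρ * γ) / 2 * (q - 2) + (1 - ρ * γ) = (1 - ρ * γ) / 2 * q from by ring]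
          exact t3
        rw [t1, hb2e, hK]
        nlinarith [mul_pos h2s hCs]
    · -- case 2 < q
      have hs2 : (2:ℝ) < s := hq2.trans hqs
      have hkey2 : q * p * (s - 2) ≤ p * (q * s) + 2 * p * (s - q) := by
        nlinarith [mul_pos hp hs0]
      have e3 : q * α ≤ (-((1 - ρ * γ) / (s - 2))) * (q - s) := by
        have hrhs : (-((1 - ρ * γ) / (s - 2))) * (q - s)
            = ((p * (q * s) + 2 * p * (s - q)) * (s - q)) / (D * (s - 2)) := by
          rw [hW]; field_simp; ring
        rw [hrhs, hαval, show q * (p * (s - q) / D) = q * (p * (s - q)) / D from by ring,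
          div_le_div_iff₀ hD0 (mul_pos hD0 (by linarith : (0:ℝ) < s - 2))]
        nlinarith [mul_le_mul_of_nonneg_right hkey2
          (le_of_lt (mul_pos (sub_pos.2 hqs) hD0))]
      have e4 : (-((1 - ρ * γ) / (s - 2))) * (q - 2) + (1 - ρ * γ)
          = (-((1 - ρ * γ) / (s - 2))) * (q - s) := by
        have hs2' : s - 2 ≠ 0 := by linarith
        field_simp
        ring
      refine (main t (h ^ (-(γ * p / s) * (q - s)) + h ^ (-((1 - ρ * γ) / (s - 2)) * (q - s)))
        (h ^ (-(γ * p / s) * q)) 0 (h ^ (-((1 - ρ * γ) / (s - 2)) * (q - 2)))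
        (by positivity) (Real.rpow_nonneg hh0.le _) le_rfl
        (Real.rpow_nonneg hh0.le _) ?_).trans ?_
      · -- pointwise bound
        filter_upwards [hc1, hc2] with ω h1 h2
        have hx0 : (0:ℝ) ≤ |v₁ t.1 ω - v₂ t.1 ω| := abs_nonneg _
        have hxs0 : (0:ℝ) ≤ |v₁ t.1 ω - v₂ t.1 ω| ^ s := Real.rpow_nonneg hx0 _
        by_cases hωA : ω ∈ A
        · have hb : |v₁ t.1 ω - v₂ t.1 ω| ^ q
              ≤ (h ^ (-(γ * p / s) * (q - s)) + h ^ (-((1 - ρ * γ) / (s - 2)) * (q - s)))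
                  * |v₁ t.1 ω - v₂ t.1 ω| ^ s
                + h ^ (-(γ * p / s) * q) := by
            have hsplit := my_rpow_split (m := h ^ (-(γ * p / s))) hx0
              (Real.rpow_pos_of_pos hh0 _) hq0.le hqs.le
            rw [Real.rpow_mul hh0.le, Real.rpow_mul hh0.le, Real.rpow_mul hh0.le]
            nlinarith [hsplit, mul_nonneg (Real.rpow_nonneg
              (Real.rpow_nonneg hh0.le (-((1 - ρ * γ) / (s - 2)))) (q - s)) hxs0]
          have h3 : ENNReal.ofReal (|v₁ t.1 ω - v₂ t.1 ω| ^ q)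
              ≤ ENNReal.ofReal
                  ((h ^ (-(γ * p / s) * (q - s)) + h ^ (-((1 - ρ * γ) / (s - 2)) * (q - s)))
                    * |v₁ t.1 ω - v₂ t.1 ω| ^ s)
                + ENNReal.ofReal (h ^ (-(γ * p / s) * q)) := by
            rw [← ENNReal.ofReal_add (by positivity) (by positivity)]
            exact ENNReal.ofReal_le_ofReal hb
          refine h3.trans (add_le_add le_rfl ?_)
          rw [indicator_of_mem hωA]
          exact self_le_add_right _ _
        · have hωA' : ¬ τ ω < T := by simpa [hAdef] using hωA
          have hτT : τ ω = T := le_antisymm (hτmem ω).2 (not_lt.1 hωA')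
          have hbddy : BddAbove
              (range fun t' : Icc (0:ℝ) (τ ω) => |v₁ t'.1 ω - v₂ t'.1 ω|) := by
            have hcon : ContinuousOn (fun t' => |v₁ t' ω - v₂ t' ω|) (Icc 0 T) :=
              (h1.sub h2).abs
            have hb := isCompact_Icc.bddAbove_image hcon
            rw [image_eq_range] at hb
            rw [hτT]
            exact hb
          have hxy : |v₁ t.1 ω - v₂ t.1 ω|
              ≤ ⨆ t' : Icc (0:ℝ) (τ ω), |v₁ t'.1 ω - v₂ t'.1 ω| := by
            have ht' : (t.1 : ℝ) ∈ Icc 0 (τ ω) := by rw [hτT]; exact t.2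
            exact le_ciSup hbddy ⟨t.1, ht'⟩
          have hb : |v₁ t.1 ω - v₂ t.1 ω| ^ q
              ≤ (h ^ (-(γ * p / s) * (q - s)) + h ^ (-((1 - ρ * γ) / (s - 2)) * (q - s)))
                  * |v₁ t.1 ω - v₂ t.1 ω| ^ s
                + h ^ (-((1 - ρ * γ) / (s - 2)) * (q - 2))
                  * (⨆ t' : Icc (0:ℝ) (τ ω), |v₁ t'.1 ω - v₂ t'.1 ω|) ^ 2 := by
            have hsplit := my_rpow_split' (m := h ^ (-((1 - ρ * γ) / (s - 2)))) hx0
              (Real.rpow_pos_of_pos hh0 _) hq2.le hqs.le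
            rw [Real.rpow_two] at hsplit
            have h7 : |v₁ t.1 ω - v₂ t.1 ω| ^ 2
                ≤ (⨆ t' : Icc (0:ℝ) (τ ω), |v₁ t'.1 ω - v₂ t'.1 ω|) ^ 2 :=
              pow_le_pow_left₀ hx0 hxy 2
            have h8 : (0:ℝ) ≤ (h ^ (-((1 - ρ * γ) / (s - 2)))) ^ (q - 2) :=
              Real.rpow_nonneg (Real.rpow_nonneg hh0.le _) _
            rw [Real.rpow_mul hh0.le, Real.rpow_mul hh0.le, Real.rpow_mul hh0.le]
            nlinarith [mul_le_mul_of_nonneg_left h7 h8,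
              mul_nonneg (Real.rpow_nonneg hh0.le (-(γ * p / s) * (q - s))) hxs0,
              Real.rpow_mul hh0.le (-(γ * p / s)) (q - s)]
          have h3 : ENNReal.ofReal (|v₁ t.1 ω - v₂ t.1 ω| ^ q)
              ≤ ENNReal.ofReal
                  ((h ^ (-(γ * p / s) * (q - s)) + h ^ (-((1 - ρ * γ) / (s - 2)) * (q - s)))
                    * |v₁ t.1 ω - v₂ t.1 ω| ^ s)
                + ENNReal.ofReal (h ^ (-((1 - ρ * γ) / (s - 2)) * (q - 2)))
                  * ENNReal.ofReal
                    ((⨆ t' : Icc (0:ℝ) (τ ω), |v₁ t'.1 ω - v₂ t'.1 ω|) ^ 2) := by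
            rw [← ENNReal.ofReal_mul (by positivity),
              ← ENNReal.ofReal_add (by positivity) (by positivity)]
            exact ENNReal.ofReal_le_ofReal hb
          refine h3.trans (add_le_add le_rfl (le_add_self.trans le_add_self))
      · -- numeric bound
        refine ENNReal.ofReal_le_ofReal ?_
        have t1 : h ^ (-(γ * p / s) * (q - s)) = h ^ (q * α) := by rw [e1]
        have t1b : h ^ (-((1 - ρ * γ) / (s - 2)) * (q - s)) ≤ h ^ (q * α) :=
          Real.rpow_le_rpow_of_exponent_ge hh0 hh1 e3
        have t4 : h ^ (-((1 - ρ * γ) / (s - 2)) * (q - 2)) * h ^ (1 - ρ * γ) ≤ h ^ (q * α) := by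
          rw [← Real.rpow_add hh0, e4]
          exact t1b
        rw [hb2e, hK]
        nlinarith [mul_pos h2s hCs, mul_le_mul_of_nonneg_right t1b
          (le_of_lt (mul_pos h2s (by linarith : (0:ℝ) < 2 * Cs))),
          Real.rpow_nonneg hh0.le (q * α), t1]
  calc (⨆ t : Icc (0:ℝ) T, ∫⁻ ω, ENNReal.ofReal (|v₁ t.1 ω - v₂ t.1 ω| ^ q) ∂μ) ^ (1/q)
      ≤ (ENNReal.ofReal (K * h ^ (q * α))) ^ (1/q) :=
        ENNReal.rpow_le_rpow (iSup_le key) (by positivity)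
    _ = ENNReal.ofReal ((K * h ^ (q * α)) ^ (1/q)) :=
        ENNReal.ofReal_rpow_of_nonneg (by positivity) (by positivity)
    _ = ENNReal.ofReal (K ^ (1/q) * h ^ α) := by
        rw [Real.mul_rpow hK0.le (Real.rpow_nonneg hh0.le _),
          ← Real.rpow_mul hh0.le]
        congr 2
        field_simp
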